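/- Let M and M̂ be compact topological manifolds, let p : M̂ → M be a covering map with finite fibers, let f : M → M be a homeomorphism, let k ≥ 1 be an integer, and let g : M̂ → M̂ be a homeomorphism lifting the iterate f^k, i.e. p ∘ g = f^k ∘ p. If every point of M is nonwandering for f (for every x ∈ M and every open neighborhood U of x there exists an integer n ≥ 1 with fⁿ(U) ∩ U ≠ ∅), then every point of M̂ is nonwandering for g. -/

import Mathlib

open Set

lemma isOpenMap_iterate {M : Type*} [TopologicalSpace M] {φ : M → M} (hφ : IsOpenMap φ) :
    ∀ n, IsOpenMap (φ^[n]) := by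
  intro n
  induction n with
  | zero => simpa using IsOpenMap.id
  | succ n ih => rw [Function.iterate_succ']; exact hφ.comp ih

/-- Chain construction: from the nonwandering property, build a nested sequence of
nonempty open sets with return times. -/
lemma nw_chain {M : Type*} [TopologicalSpace M] (φ : M → M) (hφ : IsOpenMap φ)
    (hNW : ∀ U : Set M, IsOpen U → U.Nonempty → ∃ n, 1 ≤ n ∧ (φ^[n] '' U ∩ U).Nonempty)
    (U₀ : Set M) (hU₀ : IsOpen U₀) (hne : U₀.Nonempty) :
    ∃ (W : ℕ → Set M) (T : ℕ → ℕ), W 0 = U₀ ∧ StrictMono T ∧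
      (∀ i, IsOpen (W i) ∧ (W i).Nonempty) ∧
      ∀ i j, i ≤ j → W j ⊆ W i ∧ W j ⊆ φ^[T j - T i] '' W i := by
  classical
  let step : {U : Set M // IsOpen U ∧ U.Nonempty} → ℕ × {U : Set M // IsOpen U ∧ U.Nonempty} :=
    fun U =>
      let n := (hNW U.1 U.2.1 U.2.2).choose
      ⟨n, ⟨φ^[n] '' U.1 ∩ U.1,
        ((isOpenMap_iterate hφ n) U.1 U.2.1).inter U.2.1,
        (hNW U.1 U.2.1 U.2.2).choose_spec.2⟩⟩
  let seq : ℕ → ℕ × {U : Set M // IsOpen U ∧ U.Nonempty} := fun i =>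
    Nat.rec (0, ⟨U₀, hU₀, hne⟩) (fun _ prev => ((step prev.2).1 + prev.1, (step prev.2).2)) i
  set W : ℕ → Set M := fun i => (seq i).2.1 with hWdef
  set T : ℕ → ℕ := fun i => (seq i).1 with hTdef
  have hstep1 : ∀ U, 1 ≤ (step U).1 := fun U => (hNW U.1 U.2.1 U.2.2).choose_spec.1
  have hWsucc : ∀ j, W (j+1) = φ^[(step (seq j).2).1] '' W j ∩ W j := fun j => rfl
  have hTsucc : ∀ j, T (j+1) = (step (seq j).2).1 + T j := fun j => rfl
  have hTmono : StrictMono T := by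
    apply strictMono_nat_of_lt_succ
    intro n
    have := hstep1 (seq n).2
    have := hTsucc n
    omega
  have hkey : ∀ i j, i ≤ j → W j ⊆ W i ∧ W j ⊆ φ^[T j - T i] '' W i := by
    intro i j hij
    induction j with
    | zero =>
      obtain rfl : i = 0 := Nat.le_zero.mp hij
      simpa using subset_refl _
    | succ j ih =>
      rcases Nat.lt_or_ge i (j+1) with h | h
      · have hij' : i ≤ j := Nat.lt_succ_iff.mp h
        obtain ⟨h1, h2⟩ := ih hij'
        constructor
        · exact ((hWsucc j ▸ inter_subset_right : W (j+1) ⊆ W j)).trans h1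
        · have hsub : W (j+1) ⊆ φ^[(step (seq j).2).1] '' W j :=
            hWsucc j ▸ inter_subset_left
          refine hsub.trans ((image_mono h2).trans ?_)
          rw [image_image]
          have harith : T (j+1) - T i = (step (seq j).2).1 + (T j - T i) := by
            have := hTmono.monotone hij'
            have := hTsucc j
            omega
          rw [harith]
          intro x hx
          obtain ⟨a, ha, rfl⟩ := hx
          exact ⟨a, ha, Function.iterate_add_apply φ _ _ a⟩
      · obtain rfl : i = j + 1 := le_antisymm hij h
        simpa using subset_refl _
  exact ⟨W, T, rfl, hTmono, fun i => (seq i).2.2, hkey⟩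

/-- If every nonempty open set returns under `φ`, it also returns under `φ^[k]`. -/
lemma nw_iterate {M : Type*} [TopologicalSpace M] (φ : M → M) (hφ : IsOpenMap φ)
    (k : ℕ) (hk : 1 ≤ k)
    (hNW : ∀ U : Set M, IsOpen U → U.Nonempty → ∃ n, 1 ≤ n ∧ (φ^[n] '' U ∩ U).Nonempty) :
    ∀ U : Set M, IsOpen U → U.Nonempty →
      ∃ m, 1 ≤ m ∧ ((φ^[k])^[m] '' U ∩ U).Nonempty := by
  intro U hU hne
  obtain ⟨W, T, hW0, hTmono, hWprop, hkey⟩ := nw_chain φ hφ hNW U hU hne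
  -- pigeonhole on residues of T modulo k among indices 0..k
  obtain ⟨i, j, hne', heq⟩ := Fintype.exists_ne_map_eq_of_card_lt
    (fun i : Fin (k+1) => (⟨T i % k, Nat.mod_lt _ hk⟩ : Fin k)) (by simp)
  wlog hij : (i : ℕ) < (j : ℕ) generalizing i j
  · exact this j i hne'.symm heq.symm (by have := Fin.val_injective.ne hne'; omega)
  · have hmod : T i % k = T j % k := congrArg Fin.val heq
    have hTlt : T i < T j := hTmono hij
    have hdvd : k ∣ T j - T i := by
      exact (Nat.modEq_iff_dvd' hTlt.le).mp hmod
    obtain ⟨m, hm⟩ := hdvd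
    have hm1 : 1 ≤ m := by
      rcases Nat.eq_zero_or_pos m with rfl | h
      · omega
      · exact h
    refine ⟨m, hm1, ?_⟩
    obtain ⟨hsub1, hsub2⟩ := hkey i j hij.le
    obtain ⟨hsubU, -⟩ := hkey 0 i (Nat.zero_le _)
    have hiter : (φ^[k])^[m] = φ^[T j - T i] := by
      rw [hm, Function.iterate_mul]
    obtain ⟨-, hz⟩ := hWprop j
    obtain ⟨z, hzW⟩ := hz
    refine ⟨z, ?_, ?_⟩
    · rw [hiter]
      exact image_mono (hsubU.trans (hW0 ▸ subset_refl U)) (hsub2 hzW)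
    · exact (hW0 ▸ (hkey 0 j (Nat.zero_le _)).1) hzW

/-- if `g` is a homeomorphism of a compact manifold `Mhat` lifting an
iterate `f^k` of a homeomorphism `f` of a compact manifold `M` through a finite
covering map `p`, and every point of `M` is nonwandering for `f`, then every point
of `Mhat` is nonwandering for `g`. -/
theorem stmt_4 {d d' : ℕ} {M Mhat : Type*}
    [TopologicalSpace M] [T2Space M] [CompactSpace M]
    [ChartedSpace (EuclideanSpace ℝ (Fin d)) M]
    [TopologicalSpace Mhat] [T2Space Mhat] [CompactSpace Mhat]
    [ChartedSpace (EuclideanSpace ℝ (Fin d')) Mhat]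
    (p : Mhat → M) (hp : IsCoveringMap p)
    (hfin : ∀ x : M, (p ⁻¹' {x}).Finite)
    (f : M ≃ₜ M) (k : ℕ) (hk : 1 ≤ k)
    (g : Mhat ≃ₜ Mhat) (hlift : ∀ x : Mhat, p (g x) = (⇑f)^[k] (p x))
    (hNW : ∀ (x : M) (U : Set M), IsOpen U → x ∈ U →
      ∃ n : ℕ, 1 ≤ n ∧ ((⇑f)^[n] '' U ∩ U).Nonempty) :
    ∀ (y : Mhat) (V : Set Mhat), IsOpen V → y ∈ V →
      ∃ n : ℕ, 1 ≤ n ∧ ((⇑g)^[n] '' V ∩ V).Nonempty := by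
  classical
  intro y V hV hy
  -- local homeomorphism (sheet) at y
  obtain ⟨e, hye, hpe⟩ := hp.isLocalHomeomorph y
  -- trivialization around p y
  haveI : Nonempty (p ⁻¹' {p y}) := ⟨⟨y, rfl⟩⟩
  set t := (hp (p y)).toTrivialization with ht
  have hbase : p y ∈ t.baseSet := (hp (p y)).mem_toTrivialization_baseSet
  set V' := V ∩ e.source ∩ p ⁻¹' t.baseSet with hV'
  have hV'open : IsOpen V' := (hV.inter e.open_source).inter
    (t.open_baseSet.preimage hp.continuous)
  have hyV' : y ∈ V' := ⟨⟨hy, hye⟩, hbase⟩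
  set U' := ⇑e '' V' with hU'
  have hU'open : IsOpen U' := e.isOpen_image_of_subset_source hV'open
    (fun x hx => hx.1.2)
  have hU'ne : U'.Nonempty := ⟨e y, Set.mem_image_of_mem _ hyV'⟩
  have hU't : U' ⊆ t.baseSet := by
    rintro - ⟨w, hw, rfl⟩
    show (⇑e) w ∈ _
    rw [← hpe]
    exact hw.2
  -- the nonwandering property for f^[k]
  have hNW' := nw_iterate (⇑f) f.isOpenMap k hk
    (fun U hU hne => hNW hne.choose U hU hne.choose_spec)
  have hφ₂ : IsOpenMap ((⇑f)^[k]) := isOpenMap_iterate f.isOpenMap k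
  obtain ⟨W, T, hW0, hTmono, hWprop, hkey⟩ := nw_chain ((⇑f)^[k]) hφ₂ hNW' U' hU'open hU'ne
  set c := (hfin (p y)).toFinset.card with hc
  obtain ⟨z, hz⟩ := (hWprop c).2
  have hzU' : z ∈ U' := hW0 ▸ (hkey 0 c (Nat.zero_le _)).1 hz
  have hzbase : z ∈ t.baseSet := hU't hzU'
  -- choose preimages of z along the chain
  have hxex : ∀ i : Fin (c+1), ∃ x, x ∈ W i ∧ ((⇑f)^[k])^[T c - T i] x = z := by
    intro i
    have hic : (i : ℕ) ≤ c := Nat.lt_succ_iff.mp i.isLt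
    obtain ⟨x, hxW, hxz⟩ := (hkey i c hic).2 hz
    exact ⟨x, hxW, hxz⟩
  choose x hxW hxz using hxex
  -- lift them into V'
  have hvex : ∀ i : Fin (c+1), ∃ v, v ∈ V' ∧ e v = x i := by
    intro i
    have : x i ∈ U' := hW0 ▸ (hkey 0 i (Nat.zero_le _)).1 (hxW i)
    obtain ⟨v, hv, hev⟩ := this
    exact ⟨v, hv, hev⟩
  choose v hvV' hev using hvex
  have hpv : ∀ i, p (v i) = x i := fun i => by rw [hpe]; exact hev i
  -- iterated lifting property
  have hliftn : ∀ (n : ℕ) (w : Mhat), p ((⇑g)^[n] w) = ((⇑f)^[k])^[n] (p w) := by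
    intro n
    induction n with
    | zero => intro w; simp
    | succ n ih =>
      intro w
      rw [Function.iterate_succ_apply', Function.iterate_succ_apply', hlift, ih]
  set u : Fin (c+1) → Mhat := fun i => (⇑g)^[T c - T i] (v i) with hu
  have hpu : ∀ i, p (u i) = z := fun i => by
    rw [hu]; simp only []; rw [hliftn, hpv, hxz]
  have husrc : ∀ i, u i ∈ t.source := fun i =>
    t.mem_source.mpr (by rw [hpu]; exact hzbase)
  -- pigeonhole on the finite fiber over p y
  obtain ⟨i, -, j, -, hne2, heq2⟩ := Finset.exists_ne_map_eq_of_card_lt_of_maps_to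
    (s := (Finset.univ : Finset (Fin (c+1)))) (t := (hfin (p y)).toFinset)
    (by simp [hc]) (f := fun i => ((t (u i)).2 : Mhat))
    (fun i _ => (hfin (p y)).mem_toFinset.mpr (t (u i)).2.2)
  have htu : t (u i) = t (u j) := by
    refine Prod.ext ?_ (Subtype.coe_injective heq2)
    rw [t.coe_fst (husrc i), t.coe_fst (husrc j), hpu, hpu]
  have huij : u i = u j := t.toPartialHomeomorph.injOn (husrc i) (husrc j) htu
  -- from the coincidence of lifts, produce a return for g
  have key : ∀ i j : Fin (c+1), (i : ℕ) < (j : ℕ) → u i = u j →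
      ∃ n : ℕ, 1 ≤ n ∧ ((⇑g)^[n] '' V ∩ V).Nonempty := by
    intro i j hij hueq
    have hic : (i : ℕ) ≤ c := Nat.lt_succ_iff.mp i.isLt
    have hjc : (j : ℕ) ≤ c := Nat.lt_succ_iff.mp j.isLt
    have hTij : T i < T j := hTmono hij
    have hTjc : T (j : ℕ) ≤ T c := hTmono.monotone hjc
    set m := T (j : ℕ) - T (i : ℕ) with hm
    have hsum : (T c - T (j : ℕ)) + m = T c - T (i : ℕ) := by omega
    have h1 : (⇑g)^[T c - T (j : ℕ)] ((⇑g)^[m] (v i)) = (⇑g)^[T c - T (j : ℕ)] (v j) := by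
      rw [← Function.iterate_add_apply, hsum]
      exact hueq
    have h2 : (⇑g)^[m] (v i) = v j := (g.injective.iterate _) h1
    exact ⟨m, by omega, v j, ⟨v i, (hvV' i).1.1, h2⟩, (hvV' j).1.1⟩
  rcases hne2.lt_or_gt with hij | hij
  · exact key i j hij huij
  · exact key j i hij huij.symm
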